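/- For every collection F of p-element sets and every natural number q, there exists a q-representative subcollection F̂ ⊆ F of size at most C(p+q, p), i.e., for every q-element set B, if there exists A ∈ F with A ∩ B = ∅ then there exists Â ∈ F̂ with Â ∩ B = ∅. -/

import Mathlib

open Finset

section Core

variable {β : Type*} [Fintype β] [DecidableEq β]

/-- The set of "orderings" of `β` in which every element of `T` comes before
every element of `C \ T`. -/
private def ES (C T : Finset β) : Finset (β ≃ Fin (Fintype.card β)) :=
  univ.filter (fun σ => ∀ a ∈ T, ∀ b ∈ C \ T, σ a < σ b)

private lemma mem_ES {C T : Finset β} {σ : β ≃ Fin (Fintype.card β)} :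
    σ ∈ ES C T ↔ ∀ a ∈ T, ∀ b ∈ C \ T, σ a < σ b := by
  simp [ES]

/-- There is a permutation of `β` sending `T'` into `T` and `C \ T'` into `C \ T`. -/
private lemma exists_perm_maps {C T T' : Finset β} (hT : T ⊆ C) (hT' : T' ⊆ C)
    (hcard : T.card = T'.card) :
    ∃ π : Equiv.Perm β, (∀ x ∈ T', π x ∈ T) ∧ (∀ x ∈ C \ T', π x ∈ C \ T) := by
  classical
  have hcard' : Fintype.card {y : {x // x ∈ C} // y.1 ∈ T'} =
      Fintype.card {y : {x // x ∈ C} // y.1 ∈ T} := by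
    have h1 : Fintype.card {y : {x // x ∈ C} // y.1 ∈ T'} = T'.card := by
      rw [Fintype.card_congr (Equiv.subtypeSubtypeEquivSubtype (fun hx => hT' hx))]
      exact Fintype.card_coe T'
    have h2 : Fintype.card {y : {x // x ∈ C} // y.1 ∈ T} = T.card := by
      rw [Fintype.card_congr (Equiv.subtypeSubtypeEquivSubtype (fun hx => hT hx))]
      exact Fintype.card_coe T
    rw [h1, h2, hcard]
  let e' : {y : {x // x ∈ C} // y.1 ∈ T'} ≃ {y : {x // x ∈ C} // y.1 ∈ T} :=
    Fintype.equivOfCardEq hcard'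
  let inner : Equiv.Perm {x // x ∈ C} := e'.extendSubtype
  refine ⟨Equiv.Perm.subtypeCongr inner (Equiv.refl {x : β // ¬ x ∈ C}), ?_, ?_⟩
  · intro x hx
    have hxC : x ∈ C := hT' hx
    rw [Equiv.Perm.subtypeCongr.left_apply _ _ hxC]
    exact Equiv.extendSubtype_mem e' ⟨x, hxC⟩ hx
  · intro x hx
    rw [mem_sdiff] at hx
    rw [Equiv.Perm.subtypeCongr.left_apply _ _ hx.1, mem_sdiff]
    exact ⟨(inner ⟨x, hx.1⟩).2, Equiv.extendSubtype_not_mem e' ⟨x, hx.1⟩ hx.2⟩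

private lemma ES_card_le {C T T' : Finset β} (hT : T ⊆ C) (hT' : T' ⊆ C)
    (hcard : T.card = T'.card) : (ES C T).card ≤ (ES C T').card := by
  obtain ⟨π, hπ1, hπ2⟩ := exists_perm_maps hT hT' hcard
  refine Finset.card_le_card_of_injOn (fun σ => π.trans σ) ?_ ?_
  · intro σ hσ
    rw [Finset.mem_coe, mem_ES] at hσ ⊢
    intro a ha b hb
    exact hσ _ (hπ1 a ha) _ (hπ2 b hb)
  · intro σ1 _ σ2 _ h
    simp only at h
    ext y
    have h2 : π.trans σ1 (π.symm y) = π.trans σ2 (π.symm y) := by rw [h]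
    exact congrArg Fin.val (by simpa using h2)

/-- Every ordering has an "initial segment" of any size `p ≤ |C|` inside `C`. -/
private lemma exists_initial (σ : β ≃ Fin (Fintype.card β)) :
    ∀ (p : ℕ) (C : Finset β), p ≤ C.card →
      ∃ T, T ⊆ C ∧ T.card = p ∧ σ ∈ ES C T := by
  intro p
  induction p with
  | zero =>
    intro C _
    exact ⟨∅, empty_subset _, card_empty, mem_ES.2 (by simp)⟩
  | succ p ih =>
    intro C hC
    have hne : C.Nonempty := card_pos.mp (lt_of_lt_of_le (Nat.succ_pos p) hC)
    obtain ⟨m, hm, hmin⟩ := C.exists_min_image σ hne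
    have hcard : p ≤ (C.erase m).card := by
      rw [card_erase_of_mem hm]; omega
    obtain ⟨T₀, hsub, hTcard, hgood⟩ := ih (C.erase m) hcard
    have hmT₀ : m ∉ T₀ := fun h => (mem_erase.mp (hsub h)).1 rfl
    refine ⟨insert m T₀, ?_, ?_, mem_ES.2 ?_⟩
    · exact insert_subset hm (hsub.trans (erase_subset _ _))
    · rw [card_insert_of_notMem hmT₀, hTcard]
    · intro a ha b hb
      rw [mem_sdiff, mem_insert] at hb
      push_neg at hb
      obtain ⟨hbC, hbm, hbT₀⟩ := hb
      rcases mem_insert.mp ha with rfl | haT₀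
      · exact lt_of_le_of_ne (hmin b hbC) (fun h => hbm (σ.injective h).symm)
      · exact mem_ES.mp hgood a haT₀ b (mem_sdiff.2 ⟨mem_erase.2 ⟨hbm, hbC⟩, hbT₀⟩)

/-- Bollobás set-pair inequality, uniform symmetric version. -/
private lemma bollobas_pairs (p q : ℕ) (s : Finset (Finset β × Finset β))
    (hA : ∀ z ∈ s, z.1.card = p) (hB : ∀ z ∈ s, z.2.card ≤ q)
    (hd : ∀ z ∈ s, Disjoint z.1 z.2)
    (hx : ∀ z ∈ s, ∀ w ∈ s, z ≠ w → ¬ Disjoint z.1 w.2) :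
    s.card ≤ (p + q).choose p := by
  classical
  set n := Fintype.card β
  set Ω : Finset (β ≃ Fin n) := univ with hΩ
  set E : Finset β × Finset β → Finset (β ≃ Fin n) := fun z => ES (z.1 ∪ z.2) z.1 with hE
  -- per-pair lower bound on |E z|
  have key : ∀ z ∈ s, Ω.card ≤ (p + q).choose p * (E z).card := by
    intro z hz
    set C := z.1 ∪ z.2 with hC
    have hsubA : z.1 ⊆ C := subset_union_left
    have hCcard : C.card = p + z.2.card := by
      rw [hC, card_union_of_disjoint (hd z hz), hA z hz]
    have hple : p ≤ C.card := by omega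
    have cover : Ω ⊆ (C.powersetCard p).biUnion (fun T => ES C T) := by
      intro σ _
      obtain ⟨T, hTsub, hTcard, hTgood⟩ := exists_initial σ p C hple
      exact mem_biUnion.2 ⟨T, mem_powersetCard.2 ⟨hTsub, hTcard⟩, hTgood⟩
    calc Ω.card ≤ ((C.powersetCard p).biUnion (fun T => ES C T)).card :=
          card_le_card cover
      _ ≤ ∑ T ∈ C.powersetCard p, (ES C T).card := card_biUnion_le
      _ ≤ ∑ _T ∈ C.powersetCard p, (ES C z.1).card := by
          refine Finset.sum_le_sum ?_
          intro T hT
          obtain ⟨hTsub, hTcard⟩ := mem_powersetCard.mp hT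
          exact ES_card_le hTsub hsubA (by rw [hTcard, hA z hz])
      _ = (C.powersetCard p).card * (ES C z.1).card := by rw [sum_const, smul_eq_mul]
      _ = C.card.choose p * (ES C z.1).card := by rw [card_powersetCard]
      _ ≤ (p + q).choose p * (E z).card := by
          refine Nat.mul_le_mul_right _ ?_
          rw [hCcard]
          exact Nat.choose_le_choose p (by have := hB z hz; omega)
  -- the events are pairwise disjoint
  have hdisjE : ∀ z ∈ s, ∀ w ∈ s, z ≠ w → Disjoint (E z) (E w) := by
    intro z hz w hw hne
    rw [Finset.disjoint_left]
    intro σ hσz hσw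
    obtain ⟨x, hx1, hx2⟩ := Finset.not_disjoint_iff.mp (hx z hz w hw hne)
    obtain ⟨y, hy1, hy2⟩ := Finset.not_disjoint_iff.mp (hx w hw z hz hne.symm)
    have h1 : σ x < σ y := by
      refine mem_ES.mp hσz x hx1 y (mem_sdiff.2 ⟨mem_union_right _ hy2, ?_⟩)
      exact fun hcon => (Finset.disjoint_left.mp (hd z hz)) hcon hy2
    have h2 : σ y < σ x := by
      refine mem_ES.mp hσw y hy1 x (mem_sdiff.2 ⟨mem_union_right _ hx2, ?_⟩)
      exact fun hcon => (Finset.disjoint_left.mp (hd w hw)) hcon hx2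
    exact absurd h2 (lt_asymm h1)
  have hΩpos : 0 < Ω.card := by
    rw [hΩ, Finset.card_univ]
    exact Fintype.card_pos_iff.mpr ⟨Fintype.equivFin β⟩
  have main : s.card * Ω.card ≤ (p + q).choose p * Ω.card := by
    calc s.card * Ω.card = ∑ _z ∈ s, Ω.card := by rw [sum_const, smul_eq_mul]
      _ ≤ ∑ z ∈ s, (p + q).choose p * (E z).card := Finset.sum_le_sum key
      _ = (p + q).choose p * ∑ z ∈ s, (E z).card := by rw [Finset.mul_sum]
      _ = (p + q).choose p * (s.biUnion E).card := by rw [card_biUnion hdisjE]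
      _ ≤ (p + q).choose p * Ω.card := Nat.mul_le_mul_left _ (card_le_univ _)
  exact Nat.le_of_mul_le_mul_right main hΩpos

end Core

/-- Bollobás's theorem on representatives: for every collection `F` of `p`-element sets
and every natural number `q`, there exists a `q`-representative subcollection
`F̂ ⊆ F` of size at most `C(p+q, p)`: for every `q`-element set `B`, if there exists
`A ∈ F` with `A ∩ B = ∅` then there exists `Â ∈ F̂` with `Â ∩ B = ∅`. -/
theorem exists_small_representative {α : Type*} [DecidableEq α]
    (F : Finset (Finset α)) (p q : ℕ) (hF : ∀ A ∈ F, A.card = p) :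
    ∃ Fhat : Finset (Finset α), Fhat ⊆ F ∧ Fhat.card ≤ (p + q).choose p ∧
      ∀ B : Finset α, B.card = q →
        (∃ A ∈ F, Disjoint A B) → ∃ Ahat ∈ Fhat, Disjoint Ahat B := by
  classical
  set R : Finset (Finset α) → Prop := fun G =>
    ∀ B : Finset α, B.card = q → (∃ A ∈ F, Disjoint A B) → ∃ A ∈ G, Disjoint A B with hR
  set S : Finset (Finset (Finset α)) := F.powerset.filter R with hS
  have hFS : F ∈ S := by
    rw [hS, mem_filter, mem_powerset]
    exact ⟨Subset.rfl, fun B _ h => h⟩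
  obtain ⟨Fhat, hFhatS, hmin⟩ := S.exists_min_image card ⟨F, hFS⟩
  rw [hS, mem_filter, mem_powerset] at hFhatS
  obtain ⟨hsubF, hrep⟩ := hFhatS
  refine ⟨Fhat, hsubF, ?_, hrep⟩
  -- witnesses for minimality
  have hwit : ∀ A : Finset α, ∃ B : Finset α, A ∈ Fhat →
      B.card = q ∧ Disjoint A B ∧ ∀ A' ∈ Fhat, A' ≠ A → ¬ Disjoint A' B := by
    intro A
    by_cases hA : A ∈ Fhat
    · have herase : ¬ R (Fhat.erase A) := by
        intro hcon
        have hmem : Fhat.erase A ∈ S := by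
          rw [hS, mem_filter, mem_powerset]
          exact ⟨(erase_subset _ _).trans hsubF, hcon⟩
        have := hmin _ hmem
        rw [card_erase_of_mem hA] at this
        have hpos : 0 < Fhat.card := card_pos.mpr ⟨A, hA⟩
        omega
      simp only [hR] at herase
      push_neg at herase
      obtain ⟨B, hBcard, hBex, hBnone⟩ := herase
      obtain ⟨Ahat, hAhat, hAdisj⟩ := hrep B hBcard hBex
      have hAeq : Ahat = A := by
        by_contra hne
        exact (hBnone Ahat (mem_erase.2 ⟨hne, hAhat⟩)) hAdisj
      subst hAeq
      exact ⟨B, fun _ => ⟨hBcard, hAdisj,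
        fun A' hA' hne => hBnone A' (mem_erase.2 ⟨hne, hA'⟩)⟩⟩
    · exact ⟨∅, fun h => absurd h hA⟩
  choose g hg using hwit
  -- ground set
  set U : Finset α := Fhat.sup id ∪ Fhat.sup g with hU
  have hAU : ∀ A ∈ Fhat, A ⊆ U := fun A hA =>
    (Finset.le_sup (f := id) hA).trans subset_union_left
  have hgU : ∀ A ∈ Fhat, g A ⊆ U := fun A hA =>
    (Finset.le_sup (f := g) hA).trans subset_union_right
  set t : Finset α → Finset {x : α // x ∈ U} := fun S => S.subtype (· ∈ U) with ht
  have hmem_t : ∀ (S : Finset α) (x : {x : α // x ∈ U}), x ∈ t S ↔ ↑x ∈ S := by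
    intro S x; rw [ht]; exact Finset.mem_subtype
  have hcard_t : ∀ S : Finset α, S ⊆ U → (t S).card = S.card := by
    intro S hSU
    rw [ht]
    rw [Finset.card_subtype, Finset.filter_true_of_mem (fun x hx => hSU hx)]
  have hdisj_t : ∀ S S' : Finset α, Disjoint S S' → Disjoint (t S) (t S') := by
    intro S S' h
    rw [Finset.disjoint_left] at h ⊢
    intro x hx hx'
    exact h ((hmem_t S x).mp hx) ((hmem_t S' x).mp hx')
  have hndisj_t : ∀ S S' : Finset α, S ⊆ U → ¬ Disjoint S S' → ¬ Disjoint (t S) (t S') := by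
    intro S S' hSU h
    obtain ⟨x, hx1, hx2⟩ := Finset.not_disjoint_iff.mp h
    exact Finset.not_disjoint_iff.mpr ⟨⟨x, hSU hx1⟩,
      (hmem_t S _).mpr hx1, (hmem_t S' _).mpr hx2⟩
  have ht_inj : ∀ A ∈ Fhat, ∀ A' ∈ Fhat, t A = t A' → A = A' := by
    intro A hA A' hA' h
    ext x
    constructor
    · intro hx
      have : (⟨x, hAU A hA hx⟩ : {x : α // x ∈ U}) ∈ t A := (hmem_t A _).mpr hx
      rw [h] at this
      exact (hmem_t A' _).mp this
    · intro hx
      have : (⟨x, hAU A' hA' hx⟩ : {x : α // x ∈ U}) ∈ t A' := (hmem_t A' _).mpr hx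
      rw [← h] at this
      exact (hmem_t A _).mp this
  set s : Finset (Finset {x : α // x ∈ U} × Finset {x : α // x ∈ U}) :=
    Fhat.image (fun A => (t A, t (g A))) with hs
  have hs_card : s.card = Fhat.card := by
    rw [hs]
    apply Finset.card_image_of_injOn
    intro A hA A' hA' h
    exact ht_inj A hA A' hA' (congrArg Prod.fst h)
  rw [← hs_card]
  refine bollobas_pairs p q s ?_ ?_ ?_ ?_
  · intro z hz
    obtain ⟨A, hA, rfl⟩ := Finset.mem_image.mp hz
    rw [hcard_t A (hAU A hA)]
    exact hF A (hsubF hA)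
  · intro z hz
    obtain ⟨A, hA, rfl⟩ := Finset.mem_image.mp hz
    rw [hcard_t (g A) (hgU A hA), (hg A hA).1]
  · intro z hz
    obtain ⟨A, hA, rfl⟩ := Finset.mem_image.mp hz
    exact hdisj_t A (g A) (hg A hA).2.1
  · intro z hz w hw hne
    obtain ⟨A, hA, rfl⟩ := Finset.mem_image.mp hz
    obtain ⟨A', hA', rfl⟩ := Finset.mem_image.mp hw
    have hAA' : A ≠ A' := by
      intro h; subst h; exact hne rfl
    refine hndisj_t A (g A') (hAU A hA) ?_
    exact (hg A' hA').2.2 A hA hAA'
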